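/- If f is Fréchet differentiable at the block circulant matrix bcirc(A) of a tensor A ∈ ℂ^{n×n×p}, then for every direction tensor C ∈ ℂ^{n×n×p}, the map C ↦ fold(L_f(bcirc(A), bcirc(C)) · E₁) is the Fréchet derivative of the tensor t-function f at A; in particular f(A+C) - f(A) - fold(L_f(bcirc(A),bcirc(C))·E₁) = o(‖C‖_F) as ‖C‖_F → 0. -/

import Mathlib

/-- The block circulant matrix of a third-order tensor given by its frontal faces. -/
def bcirc {n p : ℕ} (A : Fin p → Matrix (Fin n) (Fin n) ℂ) :
    Matrix (Fin p × Fin n) (Fin p × Fin n) ℂ :=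
  fun ai bj => A (ai.1 - bj.1) ai.2 bj.2

/-- Frobenius norm of a third-order tensor. -/
noncomputable def frobT {n p : ℕ} (A : Fin p → Matrix (Fin n) (Fin n) ℂ) : ℝ :=
  Real.sqrt (∑ k : Fin p, ∑ i : Fin n, ∑ j : Fin n, ‖A k i j‖ ^ 2)

/-- Frobenius norm of a matrix. -/
noncomputable def frobM {α β : Type*} [Fintype α] [Fintype β] (M : Matrix α β ℂ) : ℝ :=
  Real.sqrt (∑ a : α, ∑ b : β, ‖M a b‖ ^ 2)

/-- The tensor t-function induced by a matrix function `f`: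
`f(A) := fold (f(bcirc A) · E₁)`, where `E₁ = e₁ ⊗ Iₙ`. -/
def tFun {n p : ℕ} [NeZero p]
    (f : Matrix (Fin p × Fin n) (Fin p × Fin n) ℂ → Matrix (Fin p × Fin n) (Fin p × Fin n) ℂ)
    (A : Fin p → Matrix (Fin n) (Fin n) ℂ) : Fin p → Matrix (Fin n) (Fin n) ℂ :=
  fun k i j => f (bcirc A) (k, i) ((0 : Fin p), j)

lemma bcirc_add {n p : ℕ} (A C : Fin p → Matrix (Fin n) (Fin n) ℂ) :
    bcirc (A + C) = bcirc A + bcirc C := by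
  ext ⟨a, i⟩ ⟨b, j⟩
  simp [bcirc]

lemma frobM_bcirc {n p : ℕ} [NeZero p] (C : Fin p → Matrix (Fin n) (Fin n) ℂ) :
    frobM (bcirc C) = Real.sqrt p * frobT C := by
  unfold frobM frobT bcirc
  rw [← Real.sqrt_mul (by positivity)]
  congr 1
  rw [Fintype.sum_prod_type]
  have h1 : ∀ a : Fin p, ∑ i : Fin n, ∑ bj : Fin p × Fin n,
      ‖C (a - bj.1) i bj.2‖ ^ 2
      = ∑ k : Fin p, ∑ i : Fin n, ∑ j : Fin n, ‖C k i j‖ ^ 2 := by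
    intro a
    rw [Finset.sum_comm]
    rw [Fintype.sum_prod_type]
    refine Fintype.sum_equiv (Equiv.subLeft a) _ _ (fun b => ?_)
    rw [Finset.sum_comm]
    rfl
  calc ∑ a : Fin p, ∑ i : Fin n, ∑ bj : Fin p × Fin n,
        ‖C (a - bj.1) i bj.2‖ ^ 2
      = ∑ _a : Fin p, ∑ k : Fin p, ∑ i : Fin n, ∑ j : Fin n,
          ‖C k i j‖ ^ 2 := by
        exact Finset.sum_congr rfl (fun a _ => h1 a)
    _ = (p : ℝ) * ∑ k : Fin p, ∑ i : Fin n, ∑ j : Fin n, ‖C k i j‖ ^ 2 := by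
        rw [Finset.sum_const, Finset.card_univ, Fintype.card_fin, nsmul_eq_mul]

lemma frobT_sub_block {n p : ℕ} [NeZero p] (M : Matrix (Fin p × Fin n) (Fin p × Fin n) ℂ) :
    frobT (fun k => Matrix.of fun i j => M (k, i) ((0 : Fin p), j)) ≤ frobM M := by
  unfold frobT frobM
  apply Real.sqrt_le_sqrt
  rw [Fintype.sum_prod_type]
  refine Finset.sum_le_sum (fun k _ => Finset.sum_le_sum (fun i _ => ?_))
  rw [Fintype.sum_prod_type]
  have := Finset.single_le_sum (f := fun b : Fin p =>
      ∑ j : Fin n, ‖M (k, i) (b, j)‖ ^ 2)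
    (fun b _ => Finset.sum_nonneg fun j _ => by positivity)
    (Finset.mem_univ (0 : Fin p))
  simpa using this

theorem tFrechet_of_matrix_frechet {n p : ℕ} [NeZero p]
    (f : Matrix (Fin p × Fin n) (Fin p × Fin n) ℂ → Matrix (Fin p × Fin n) (Fin p × Fin n) ℂ)
    (A : Fin p → Matrix (Fin n) (Fin n) ℂ)
    (L : Matrix (Fin p × Fin n) (Fin p × Fin n) ℂ →ₗ[ℂ] Matrix (Fin p × Fin n) (Fin p × Fin n) ℂ)
    (hL : ∀ ε > (0 : ℝ), ∃ δ > (0 : ℝ), ∀ E : Matrix (Fin p × Fin n) (Fin p × Fin n) ℂ,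
      frobM E < δ → frobM (f (bcirc A + E) - f (bcirc A) - L E) ≤ ε * frobM E) :
    ∀ ε > (0 : ℝ), ∃ δ > (0 : ℝ), ∀ C : Fin p → Matrix (Fin n) (Fin n) ℂ,
      frobT C < δ →
        frobT (fun k => tFun f (A + C) k - tFun f A k -
            Matrix.of (fun i j => L (bcirc C) (k, i) ((0 : Fin p), j))) ≤ ε * frobT C := by
  intro ε hε
  have hp : (0 : ℝ) < Real.sqrt p := Real.sqrt_pos.mpr (by
    exact_mod_cast Nat.pos_of_ne_zero (NeZero.ne p))
  obtain ⟨δ', hδ', hδ'prop⟩ := hL (ε / Real.sqrt p) (by positivity)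
  refine ⟨δ' / Real.sqrt p, by positivity, fun C hC => ?_⟩
  set E := bcirc C with hE
  have hEnorm : frobM E = Real.sqrt p * frobT C := frobM_bcirc C
  have hEsmall : frobM E < δ' := by
    rw [hEnorm]
    calc Real.sqrt p * frobT C < Real.sqrt p * (δ' / Real.sqrt p) := by
          exact mul_lt_mul_of_pos_left hC hp
      _ = δ' := by field_simp
  have hmain := hδ'prop E hEsmall
  set M := f (bcirc A + E) - f (bcirc A) - L E with hM
  have hts : (fun k => tFun f (A + C) k - tFun f A k -
      Matrix.of (fun i j => L (bcirc C) (k, i) ((0 : Fin p), j)))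
      = fun k => Matrix.of fun i j => M (k, i) ((0 : Fin p), j) := by
    funext k
    ext i j
    simp [hM, hE, tFun, bcirc_add, Matrix.sub_apply, Matrix.add_apply]
  rw [hts]
  calc frobT (fun k => Matrix.of fun i j => M (k, i) ((0 : Fin p), j))
      ≤ frobM M := frobT_sub_block M
    _ ≤ (ε / Real.sqrt p) * frobM E := hmain
    _ = ε * frobT C := by rw [hEnorm]; field_simp
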